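/- Let j, k, ℓ ∈ ℤ² be nonzero with j + k + ℓ = 0, define C_{jk} := (⟨j, k^⊥⟩ / (4π)) (1/|j|² − 1/|k|²) (and similarly C_{kℓ}, C_{jℓ}), let σ ∈ {−1, 1}, and let x, y, z : ℝ → ℝ be differentiable functions satisfying the triad system x'(t) = σ C_{kℓ} y(t) z(t), y'(t) = σ C_{jℓ} x(t) z(t), z'(t) = σ C_{jk} x(t) y(t) for all t ∈ ℝ. Then both the enstrophy x(t)² + y(t)² + z(t)² and the energy x(t)²/|j|² + y(t)²/|k|² + z(t)²/|ℓ|² are constant in t. -/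

import Mathlib

open Real

/-- The 2D Euler interaction constant
`C_{jk} := (⟨j, k^⊥⟩ / (4π)) (1/|j|² − 1/|k|²)` with `k^⊥ := (k₂, −k₁)`, so that
`⟨j, k^⊥⟩ = j₁ k₂ − j₂ k₁`. -/
noncomputable def eulerC (j k : ℤ × ℤ) : ℝ :=
  (((j.1 : ℝ) * (k.2 : ℝ) - (j.2 : ℝ) * (k.1 : ℝ)) / (4 * Real.pi)) *
    (1 / ((j.1 : ℝ) ^ 2 + (j.2 : ℝ) ^ 2) - 1 / ((k.1 : ℝ) ^ 2 + (k.2 : ℝ) ^ 2))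

/-- each Euler triad system conserves both the enstrophy
`x² + y² + z²` and the energy `x²/|j|² + y²/|k|² + z²/|ℓ|²`. -/
theorem euler_triad_conserves_enstrophy_and_energy
    (j k ℓ : ℤ × ℤ) (hj : j ≠ 0) (hk : k ≠ 0) (hl : ℓ ≠ 0)
    (hsum : j + k + ℓ = 0)
    (σ : ℝ) (hσ : σ = -1 ∨ σ = 1)
    (x y z : ℝ → ℝ)
    (hx : ∀ t : ℝ, HasDerivAt x (σ * eulerC k ℓ * y t * z t) t)
    (hy : ∀ t : ℝ, HasDerivAt y (σ * eulerC j ℓ * x t * z t) t)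
    (hz : ∀ t : ℝ, HasDerivAt z (σ * eulerC j k * x t * y t) t) :
    (∀ t t' : ℝ,
      x t ^ 2 + y t ^ 2 + z t ^ 2 = x t' ^ 2 + y t' ^ 2 + z t' ^ 2) ∧
    (∀ t t' : ℝ,
      x t ^ 2 / ((j.1 : ℝ) ^ 2 + (j.2 : ℝ) ^ 2) +
        y t ^ 2 / ((k.1 : ℝ) ^ 2 + (k.2 : ℝ) ^ 2) +
        z t ^ 2 / ((ℓ.1 : ℝ) ^ 2 + (ℓ.2 : ℝ) ^ 2) =
      x t' ^ 2 / ((j.1 : ℝ) ^ 2 + (j.2 : ℝ) ^ 2) +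
        y t' ^ 2 / ((k.1 : ℝ) ^ 2 + (k.2 : ℝ) ^ 2) +
        z t' ^ 2 / ((ℓ.1 : ℝ) ^ 2 + (ℓ.2 : ℝ) ^ 2)) := by
  have hl1 : (ℓ.1 : ℝ) = -((j.1 : ℝ) + (k.1 : ℝ)) := by
    have h1 : j.1 + k.1 + ℓ.1 = 0 := by
      have := congrArg Prod.fst hsum; simpa using this
    push_cast [show ℓ.1 = -(j.1 + k.1) by omega]; ring
  have hl2 : (ℓ.2 : ℝ) = -((j.2 : ℝ) + (k.2 : ℝ)) := by
    have h2 : j.2 + k.2 + ℓ.2 = 0 := by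
      have := congrArg Prod.snd hsum; simpa using this
    push_cast [show ℓ.2 = -(j.2 + k.2) by omega]; ring
  set D : ℝ := (j.1 : ℝ) * (k.2 : ℝ) - (j.2 : ℝ) * (k.1 : ℝ) with hD
  have e1 : eulerC k ℓ = D / (4 * Real.pi) *
      (1 / ((k.1 : ℝ) ^ 2 + (k.2 : ℝ) ^ 2) - 1 / ((ℓ.1 : ℝ) ^ 2 + (ℓ.2 : ℝ) ^ 2)) := by
    have hnum : (k.1 : ℝ) * (ℓ.2 : ℝ) - (k.2 : ℝ) * (ℓ.1 : ℝ) = D := by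
      rw [hl1, hl2, hD]; ring
    unfold eulerC
    rw [hnum]
  have e2 : eulerC j ℓ = (-D) / (4 * Real.pi) *
      (1 / ((j.1 : ℝ) ^ 2 + (j.2 : ℝ) ^ 2) - 1 / ((ℓ.1 : ℝ) ^ 2 + (ℓ.2 : ℝ) ^ 2)) := by
    have hnum : (j.1 : ℝ) * (ℓ.2 : ℝ) - (j.2 : ℝ) * (ℓ.1 : ℝ) = -D := by
      rw [hl1, hl2, hD]; ring
    unfold eulerC
    rw [hnum]
  have e3 : eulerC j k = D / (4 * Real.pi) *
      (1 / ((j.1 : ℝ) ^ 2 + (j.2 : ℝ) ^ 2) - 1 / ((k.1 : ℝ) ^ 2 + (k.2 : ℝ) ^ 2)) := by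
    unfold eulerC; rw [hD]
  have key1 : eulerC k ℓ + eulerC j ℓ + eulerC j k = 0 := by
    rw [e1, e2, e3]; ring
  have key2 : eulerC k ℓ / ((j.1 : ℝ) ^ 2 + (j.2 : ℝ) ^ 2)
      + eulerC j ℓ / ((k.1 : ℝ) ^ 2 + (k.2 : ℝ) ^ 2)
      + eulerC j k / ((ℓ.1 : ℝ) ^ 2 + (ℓ.2 : ℝ) ^ 2) = 0 := by
    rw [e1, e2, e3]; ring
  constructor
  · have hF : ∀ t : ℝ, HasDerivAt (fun t => x t ^ 2 + y t ^ 2 + z t ^ 2) 0 t := by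
      intro t
      have h := (((hx t).pow 2).add ((hy t).pow 2)).add ((hz t).pow 2)
      refine h.congr_deriv ?_
      linear_combination (2 * σ * x t * y t * z t) * key1
    intro t t'
    exact is_const_of_deriv_eq_zero (fun s => (hF s).differentiableAt)
      (fun s => (hF s).deriv) t t'
  · have hF : ∀ t : ℝ, HasDerivAt (fun t =>
        x t ^ 2 / ((j.1 : ℝ) ^ 2 + (j.2 : ℝ) ^ 2) +
        y t ^ 2 / ((k.1 : ℝ) ^ 2 + (k.2 : ℝ) ^ 2) +
        z t ^ 2 / ((ℓ.1 : ℝ) ^ 2 + (ℓ.2 : ℝ) ^ 2)) 0 t := by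
      intro t
      have h := ((((hx t).pow 2).div_const ((j.1 : ℝ) ^ 2 + (j.2 : ℝ) ^ 2)).add
          (((hy t).pow 2).div_const ((k.1 : ℝ) ^ 2 + (k.2 : ℝ) ^ 2))).add
        (((hz t).pow 2).div_const ((ℓ.1 : ℝ) ^ 2 + (ℓ.2 : ℝ) ^ 2))
      refine h.congr_deriv ?_
      linear_combination (2 * σ * x t * y t * z t) * key2
    intro t t'
    exact is_const_of_deriv_eq_zero (fun s => (hF s).differentiableAt)
      (fun s => (hF s).deriv) t t'
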